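/- Let $s_1, \ldots, s_n \in [0,1]$ be a finite population with mean $\mu = \frac{1}{n}\sum_{j=1}^n s_j$, let $X_1, \ldots, X_p$ (with $1 \le p \le n$) be drawn uniformly at random without replacement from this population, and fix $\delta \in (0,1)$. If $a \ge \frac{25}{2}\log\frac{2}{\delta}$, then with probability at least $1 - \delta$ the empirical mean satisfies $\left|\frac{X_1 + \cdots + X_p}{p} - \mu\right| < \frac{1}{5}\sqrt{\frac{a}{p}}$; in particular, the upper confidence bound $\frac{X_1 + \cdots + X_p}{p} + \sqrt{\frac{a}{p}}$ exceeds $\mu$ with probability at least $1 - \delta$. -/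

import Mathlib

open scoped Classical BigOperators

namespace UCBAux

/-- The swap involution on triples. -/
noncomputable def swp {n k : ℕ} (t : (Fin k ↪ Fin n) × Fin k × Fin n) :
    (Fin k ↪ Fin n) × Fin k × Fin n :=
  (Function.Embedding.setValue t.1 t.2.1 t.2.2, t.2.1, t.1 t.2.1)

lemma setValue_apply_ne {n k : ℕ} (τ : Fin k ↪ Fin n) (l m : Fin k) (i : Fin n)
    (hi : i ∉ Set.range τ) (hm : m ≠ l) :
    Function.Embedding.setValue τ l i m = τ m :=
  Function.Embedding.setValue_eq_of_ne hm (fun h => hi ⟨m, h⟩)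

lemma swp_mem {n k : ℕ} (t : (Fin k ↪ Fin n) × Fin k × Fin n)
    (ht : t.2.2 ∉ Set.range t.1) : (swp t).2.2 ∉ Set.range (swp t).1 := by
  obtain ⟨τ, l, i⟩ := t
  simp only [swp] at ht ⊢
  rintro ⟨m, hm⟩
  by_cases h : m = l
  · rw [h, Function.Embedding.setValue_eq] at hm
    exact ht ⟨l, hm.symm⟩
  · rw [setValue_apply_ne τ l m i ht h] at hm
    exact h (τ.injective hm)

lemma swp_swp {n k : ℕ} (t : (Fin k ↪ Fin n) × Fin k × Fin n)
    (ht : t.2.2 ∉ Set.range t.1) : swp (swp t) = t := by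
  obtain ⟨τ, l, i⟩ := t
  simp only [swp] at ht ⊢
  refine Prod.ext ?_ (Prod.ext rfl ?_)
  · ext m
    by_cases h : m = l
    · subst h
      simp [Function.Embedding.setValue]
    · have h' : τ m ≠ i := fun hc => ht ⟨m, hc⟩
      simp [Function.Embedding.setValue, h, h']
  · simp [Function.Embedding.setValue_eq]

end UCBAux

namespace UCBAux

lemma prod_setValue {n k : ℕ} (x : Fin n → ℝ) (τ : Fin k ↪ Fin n) (l : Fin k) (i : Fin n)
    (hi : i ∉ Set.range τ) :
    ∏ j, x (Function.Embedding.setValue τ l i j)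
      = x i * ∏ m ∈ Finset.univ.erase l, x (τ m) := by
  rw [← Finset.mul_prod_erase Finset.univ (fun j => x (Function.Embedding.setValue τ l i j))
      (Finset.mem_univ l), Function.Embedding.setValue_eq]
  congr 1
  refine Finset.prod_congr rfl fun m hm => ?_
  rw [setValue_apply_ne τ l m i hi (Finset.ne_of_mem_erase hm)]

lemma pointwise_nonneg {n k : ℕ} (x : Fin n → ℝ) (hx : ∀ i, 0 ≤ x i)
    (t : (Fin k ↪ Fin n) × Fin k × Fin n) (ht : t.2.2 ∉ Set.range t.1) :
    0 ≤ ((∏ j, x (t.1 j)) * (x (t.1 t.2.1) - x t.2.2)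
        + (∏ j, x ((swp t).1 j)) * (x ((swp t).1 (swp t).2.1) - x (swp t).2.2)) := by
  obtain ⟨τ, l, i⟩ := t
  simp only [swp] at ht ⊢
  have hQ : 0 ≤ ∏ m ∈ Finset.univ.erase l, x (τ m) := Finset.prod_nonneg fun m _ => hx _
  rw [prod_setValue x τ l i ht, Function.Embedding.setValue_eq,
    ← Finset.mul_prod_erase Finset.univ (fun j => x (τ j)) (Finset.mem_univ l)]
  nlinarith [sq_nonneg (x (τ l) - x i)]

end UCBAux

namespace UCBAux

lemma cross_nonneg {n k : ℕ} (x : Fin n → ℝ) (hx : ∀ i, 0 ≤ x i) :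
    0 ≤ ∑ τ : Fin k ↪ Fin n, ∑ l : Fin k,
        ∑ i ∈ Finset.univ.filter (fun i => i ∉ Set.range τ),
          (∏ j, x (τ j)) * (x (τ l) - x i) := by
  classical
  set f : (Fin k ↪ Fin n) × Fin k × Fin n → ℝ :=
    fun t => (∏ j, x (t.1 j)) * (x (t.1 t.2.1) - x t.2.2) with hf
  set S : Finset ((Fin k ↪ Fin n) × Fin k × Fin n) :=
    Finset.univ.filter (fun t => t.2.2 ∉ Set.range t.1) with hS
  have hmem : ∀ t ∈ S, t.2.2 ∉ Set.range t.1 := fun t ht => (Finset.mem_filter.mp ht).2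
  have key : ∑ τ : Fin k ↪ Fin n, ∑ l : Fin k,
      ∑ i ∈ Finset.univ.filter (fun i => i ∉ Set.range τ),
        (∏ j, x (τ j)) * (x (τ l) - x i) = ∑ t ∈ S, f t := by
    rw [hS, Finset.sum_filter, Fintype.sum_prod_type]
    refine Finset.sum_congr rfl fun τ _ => ?_
    rw [Fintype.sum_prod_type]
    refine Finset.sum_congr rfl fun l _ => ?_
    rw [Finset.sum_filter]
  have hswap : ∑ t ∈ S, f t = ∑ t ∈ S, f (swp t) := by
    refine Finset.sum_nbij' (fun t => swp t) (fun t => swp t) ?_ ?_ ?_ ?_ ?_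
    · intro t ht
      simp only [hS, Finset.mem_filter, Finset.mem_univ, true_and] at ht ⊢
      exact swp_mem t ht
    · intro t ht
      simp only [hS, Finset.mem_filter, Finset.mem_univ, true_and] at ht ⊢
      exact swp_mem t ht
    · intro t ht
      exact swp_swp t (hmem t ht)
    · intro t ht
      exact swp_swp t (hmem t ht)
    · intro t ht
      rw [swp_swp t (hmem t ht)]
  have h2 : (2 : ℝ) * ∑ t ∈ S, f t = ∑ t ∈ S, (f t + f (swp t)) := by
    rw [Finset.sum_add_distrib, ← hswap]; ring
  have hpos : 0 ≤ ∑ t ∈ S, (f t + f (swp t)) :=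
    Finset.sum_nonneg fun t ht => pointwise_nonneg x hx t (hmem t ht)
  rw [key]
  nlinarith [h2 ▸ hpos]

end UCBAux

namespace UCBAux

lemma key_corr (n k : ℕ) (x : Fin n → ℝ) (hx : ∀ i, 0 ≤ x i) :
    (k : ℝ) * (∑ i, x i) * ∑ τ : Fin k ↪ Fin n, ∏ j, x (τ j) ≤
      (n : ℝ) * ∑ τ : Fin k ↪ Fin n, (∏ j, x (τ j)) * ∑ l, x (τ l) := by
  classical
  have main_eq : ∀ τ : Fin k ↪ Fin n,
      ∑ l : Fin k, ∑ i ∈ Finset.univ.filter (fun i => i ∉ Set.range τ),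
          (∏ j, x (τ j)) * (x (τ l) - x i)
        = (n : ℝ) * ((∏ j, x (τ j)) * ∑ l, x (τ l))
          - (k : ℝ) * (∑ i, x i) * (∏ j, x (τ j)) := by
    intro τ
    set P : ℝ := ∏ j, x (τ j) with hP
    have hzero : ∑ l : Fin k, ∑ l' : Fin k, P * (x (τ l) - x (τ l')) = 0 := by
      have h := Finset.sum_comm (s := (Finset.univ : Finset (Fin k)))
        (t := (Finset.univ : Finset (Fin k)))
        (f := fun l l' => P * (x (τ l) - x (τ l')))
      have h2 : ∑ l' : Fin k, ∑ l : Fin k, P * (x (τ l) - x (τ l'))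
          = - ∑ l : Fin k, ∑ l' : Fin k, P * (x (τ l) - x (τ l')) := by
        rw [← Finset.sum_neg_distrib]
        refine Finset.sum_congr rfl fun l _ => ?_
        rw [← Finset.sum_neg_distrib]
        refine Finset.sum_congr rfl fun l' _ => ?_
        ring
      linarith [h.trans h2]
    have hin : ∀ l : Fin k, ∑ i ∈ Finset.univ.filter (fun i => i ∈ Set.range τ),
        P * (x (τ l) - x i) = ∑ l' : Fin k, P * (x (τ l) - x (τ l')) := by
      intro l
      have himg : Finset.univ.filter (fun i => i ∈ Set.range τ)
          = Finset.univ.image τ := by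
        ext i; simp [Set.mem_range, eq_comm]
      rw [himg, Finset.sum_image (fun a _ b _ h => τ.injective h)]
    have hsplit : ∀ l : Fin k,
        ∑ i ∈ Finset.univ.filter (fun i => i ∉ Set.range τ), P * (x (τ l) - x i)
          = ∑ i : Fin n, P * (x (τ l) - x i)
            - ∑ l' : Fin k, P * (x (τ l) - x (τ l')) := by
      intro l
      rw [← hin l]
      have := Finset.sum_filter_add_sum_filter_not (Finset.univ : Finset (Fin n))
        (fun i => i ∈ Set.range τ) (fun i => P * (x (τ l) - x i))
      linarith
    calc ∑ l : Fin k, ∑ i ∈ Finset.univ.filter (fun i => i ∉ Set.range τ),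
          P * (x (τ l) - x i)
        = ∑ l : Fin k, (∑ i : Fin n, P * (x (τ l) - x i)
            - ∑ l' : Fin k, P * (x (τ l) - x (τ l'))) := by
          exact Finset.sum_congr rfl fun l _ => hsplit l
      _ = (∑ l : Fin k, ∑ i : Fin n, P * (x (τ l) - x i)) - 0 := by
          rw [Finset.sum_sub_distrib, hzero]
      _ = (n : ℝ) * (P * ∑ l, x (τ l)) - (k : ℝ) * (∑ i, x i) * P := by
          simp only [mul_sub, Finset.sum_sub_distrib, Finset.sum_const,
            Finset.card_univ, Fintype.card_fin, nsmul_eq_mul, ← Finset.mul_sum,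
            ← Finset.sum_mul, sub_zero]
          ring
  have hc := cross_nonneg (k := k) x hx
  have : ∑ τ : Fin k ↪ Fin n, ∑ l : Fin k,
      ∑ i ∈ Finset.univ.filter (fun i => i ∉ Set.range τ),
        (∏ j, x (τ j)) * (x (τ l) - x i)
      = (n : ℝ) * ∑ τ : Fin k ↪ Fin n, ((∏ j, x (τ j)) * ∑ l, x (τ l))
        - (k : ℝ) * (∑ i, x i) * ∑ τ : Fin k ↪ Fin n, ∏ j, x (τ j) := by
    rw [Finset.sum_congr rfl fun τ _ => main_eq τ, Finset.sum_sub_distrib,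
      ← Finset.mul_sum, ← Finset.mul_sum]
  linarith [this ▸ hc]

end UCBAux

namespace UCBAux

/-- Decomposition of the sum over `Fin (k+1) ↪ Fin n`. -/
lemma I_succ (n k : ℕ) (x : Fin n → ℝ) :
    ∑ σ : Fin (k+1) ↪ Fin n, ∏ j, x (σ j)
      = ∑ τ : Fin k ↪ Fin n,
          (∑ i ∈ Finset.univ.filter (fun i => i ∉ Set.range τ), x i) * ∏ j, x (τ j) := by
  classical
  have key : ∑ σ : Fin (k+1) ↪ Fin n, ∏ j, x (σ j)
      = ∑ t : Σ τ : Fin k ↪ Fin n, ↥(Set.range τ)ᶜ, x t.2 * ∏ j, x (t.1 j) := by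
    refine (Fintype.sum_equiv
      (((Function.Embedding.optionEmbeddingEquiv (Fin k) (Fin n)).symm.trans
        (Equiv.embeddingCongr (finSuccEquiv k).symm (Equiv.refl (Fin n)))))
      (fun t => x t.2 * ∏ j, x (t.1 j))
      (fun σ => ∏ j, x (σ j)) ?_).symm
    rintro ⟨τ, i⟩
    have happ : ∀ j : Fin (k+1),
        ((((Function.Embedding.optionEmbeddingEquiv (Fin k) (Fin n)).symm.trans
          (Equiv.embeddingCongr (finSuccEquiv k).symm (Equiv.refl (Fin n)))))
            ⟨τ, i⟩) j = (τ.optionElim i i.2) ((finSuccEquiv k) j) := by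
      intro j
      simp [Equiv.embeddingCongr, Function.Embedding.trans, Equiv.toEmbedding]
    dsimp only
    refine Eq.symm ?_
    rw [Fin.prod_univ_succ]
    simp only [happ, finSuccEquiv_zero, finSuccEquiv_succ,
      Function.Embedding.optionElim_apply]
    simp [Option.elim']
  rw [key, ← Finset.univ_sigma_univ, Finset.sum_sigma]
  refine Finset.sum_congr rfl fun τ _ => ?_
  dsimp only
  rw [← Finset.sum_mul]
  congr 1
  rw [← Finset.sum_subtype (Finset.univ.filter (fun i => i ∉ Set.range τ))
    (by intro i; simp) (fun i => x i)]

end UCBAux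

namespace UCBAux

lemma step (n k : ℕ) (x : Fin n → ℝ) (hx : ∀ i, 0 ≤ x i) :
    (n : ℝ) * ∑ σ : Fin (k+1) ↪ Fin n, ∏ j, x (σ j)
      ≤ ((n : ℝ) - k) * (∑ i, x i) * ∑ τ : Fin k ↪ Fin n, ∏ j, x (τ j) := by
  classical
  have hdecomp : ∑ σ : Fin (k+1) ↪ Fin n, ∏ j, x (σ j)
      = (∑ i, x i) * (∑ τ : Fin k ↪ Fin n, ∏ j, x (τ j))
        - ∑ τ : Fin k ↪ Fin n, (∏ j, x (τ j)) * ∑ l, x (τ l) := by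
    rw [I_succ n k x]
    rw [Finset.mul_sum, ← Finset.sum_sub_distrib]
    refine Finset.sum_congr rfl fun τ _ => ?_
    have himg : Finset.univ.filter (fun i => i ∈ Set.range τ)
        = Finset.univ.image τ := by
      ext i; simp [Set.mem_range, eq_comm]
    have hsum : ∑ i ∈ Finset.univ.filter (fun i => i ∉ Set.range τ), x i
        = (∑ i, x i) - ∑ l, x (τ l) := by
      have h := Finset.sum_filter_add_sum_filter_not (Finset.univ : Finset (Fin n))
        (fun i => i ∈ Set.range τ) x
      have h2 : ∑ i ∈ Finset.univ.filter (fun i => i ∈ Set.range τ), x i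
          = ∑ l, x (τ l) := by
        rw [himg, Finset.sum_image (fun a _ b _ h => τ.injective h)]
      linarith
    rw [hsum]; ring
  have hkey := key_corr n k x hx
  have hI : 0 ≤ ∑ τ : Fin k ↪ Fin n, ∏ j, x (τ j) :=
    Finset.sum_nonneg fun τ _ => Finset.prod_nonneg fun j _ => hx _
  rw [hdecomp]
  nlinarith [hkey]

lemma maclaurin (n p : ℕ) (x : Fin n → ℝ) (hx : ∀ i, 0 ≤ x i) :
    (n : ℝ) ^ p * ∑ σ : Fin p ↪ Fin n, ∏ j, x (σ j)
      ≤ (n.descFactorial p : ℝ) * (∑ i, x i) ^ p := by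
  classical
  induction p with
  | zero =>
      simp only [pow_zero, one_mul, Nat.descFactorial_zero, Nat.cast_one]
      have : ∑ σ : Fin 0 ↪ Fin n, ∏ j : Fin 0, x (σ j)
          = (Fintype.card (Fin 0 ↪ Fin n) : ℝ) := by
        simp [Finset.card_univ]
      rw [this]
      simp [Fintype.card_embedding_eq]
  | succ p ih =>
      have he1 : 0 ≤ ∑ i, x i := Finset.sum_nonneg fun i _ => hx i
      by_cases hpn : p < n
      · have hs := step n p x hx
        have hnn : (0:ℝ) ≤ (n:ℝ)^p := by positivity
        calc (n : ℝ) ^ (p+1) * ∑ σ : Fin (p+1) ↪ Fin n, ∏ j, x (σ j)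
            = (n:ℝ)^p * ((n : ℝ) * ∑ σ : Fin (p+1) ↪ Fin n, ∏ j, x (σ j)) := by ring
          _ ≤ (n:ℝ)^p * (((n : ℝ) - p) * (∑ i, x i) * ∑ τ : Fin p ↪ Fin n, ∏ j, x (τ j)) :=
              mul_le_mul_of_nonneg_left hs hnn
          _ = ((n : ℝ) - p) * (∑ i, x i) * ((n:ℝ)^p * ∑ τ : Fin p ↪ Fin n, ∏ j, x (τ j)) := by
              ring
          _ ≤ ((n : ℝ) - p) * (∑ i, x i) * ((n.descFactorial p : ℝ) * (∑ i, x i) ^ p) := by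
              refine mul_le_mul_of_nonneg_left ih ?_
              have : (p:ℝ) ≤ n := by exact_mod_cast hpn.le
              nlinarith
          _ = (n.descFactorial (p+1) : ℝ) * (∑ i, x i) ^ (p+1) := by
              rw [Nat.descFactorial_succ]
              push_cast [Nat.cast_sub hpn.le]
              ring
      · have hempty : IsEmpty (Fin (p+1) ↪ Fin n) := by
          constructor
          intro f
          have := Fintype.card_le_of_embedding f
          simp only [Fintype.card_fin] at this
          omega
        have : ∑ σ : Fin (p+1) ↪ Fin n, ∏ j, x (σ j) = 0 := by
          rw [Finset.univ_eq_empty, Finset.sum_empty]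
        rw [this, mul_zero]
        positivity

end UCBAux

namespace UCBAux

lemma phi_pos (m : ℝ) (hm0 : 0 ≤ m) (hm1 : m ≤ 1) (y : ℝ) :
    0 < 1 - m + m * Real.exp y := by
  rcases eq_or_lt_of_le hm0 with h | h
  · simp [← h]
  · nlinarith [Real.exp_pos y, mul_pos h (Real.exp_pos y)]

lemma hasDerivF (m : ℝ) (hm0 : 0 ≤ m) (hm1 : m ≤ 1) (y : ℝ) :
    HasDerivAt (fun y => y * m + y^2/8 - Real.log (1 - m + m * Real.exp y))
      (m + y/4 - m * Real.exp y / (1 - m + m * Real.exp y)) y := by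
  have hφ : HasDerivAt (fun y => 1 - m + m * Real.exp y) (m * Real.exp y) y :=
    ((Real.hasDerivAt_exp y).const_mul m).const_add (1 - m)
  have hlog : HasDerivAt (fun y => Real.log (1 - m + m * Real.exp y))
      (m * Real.exp y / (1 - m + m * Real.exp y)) y :=
    hφ.log (ne_of_gt (phi_pos m hm0 hm1 y))
  have h1 : HasDerivAt (fun y : ℝ => y * m) m y := by
    simpa using (hasDerivAt_id y).mul_const m
  have h2 : HasDerivAt (fun y : ℝ => y^2/8) (2 * y / 8) y := by
    simpa using (hasDerivAt_pow 2 y).div_const 8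
  have := (h1.add h2).sub hlog
  exact this.congr_deriv (by ring)

lemma hasDerivG (m : ℝ) (hm0 : 0 ≤ m) (hm1 : m ≤ 1) (y : ℝ) :
    HasDerivAt (fun y => m + y/4 - m * Real.exp y / (1 - m + m * Real.exp y))
      (1/4 - m * Real.exp y * (1 - m) / (1 - m + m * Real.exp y)^2) y := by
  have hφ : HasDerivAt (fun y => 1 - m + m * Real.exp y) (m * Real.exp y) y :=
    ((Real.hasDerivAt_exp y).const_mul m).const_add (1 - m)
  have hnum : HasDerivAt (fun y => m * Real.exp y) (m * Real.exp y) y :=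
    (Real.hasDerivAt_exp y).const_mul m
  have hne := ne_of_gt (phi_pos m hm0 hm1 y)
  have hdiv := hnum.div hφ hne
  have h2 : HasDerivAt (fun y : ℝ => m + y/4) (1/4) y := by
    simpa using ((hasDerivAt_id y).div_const 4).const_add m
  have := h2.sub hdiv
  have hpos := phi_pos m hm0 hm1 y
  exact this.congr_deriv (by field_simp; ring)

lemma logistic_bound (m y : ℝ) (hm0 : 0 ≤ m) (hm1 : m ≤ 1) (hy : 0 ≤ y) :
    1 - m + m * Real.exp y ≤ Real.exp (y * m + y^2 / 8) := by
  set G : ℝ → ℝ := fun y => m + y/4 - m * Real.exp y / (1 - m + m * Real.exp y) with hG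
  set F : ℝ → ℝ := fun y => y * m + y^2/8 - Real.log (1 - m + m * Real.exp y) with hF
  have hGmono : Monotone G := by
    refine monotone_of_deriv_nonneg (fun z => (hasDerivG m hm0 hm1 z).differentiableAt) ?_
    intro z
    rw [(hasDerivG m hm0 hm1 z).deriv]
    have hpos := phi_pos m hm0 hm1 z
    rw [sub_nonneg, div_le_iff₀ (by positivity)]
    nlinarith [sq_nonneg (1 - m - m * Real.exp z), Real.exp_pos z,
      mul_nonneg hm0 (Real.exp_pos z).le]
  have hG0 : G 0 = 0 := by
    rw [hG]
    simp only [Real.exp_zero, mul_one]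
    have h1 : 1 - m + m = 1 := by ring
    rw [h1]
    simp
  have hFmono : MonotoneOn F (Set.Ici (0:ℝ)) := by
    refine monotoneOn_of_deriv_nonneg (convex_Ici 0) ?_ ?_ ?_
    · exact (Differentiable.continuous
        (fun z => (hasDerivF m hm0 hm1 z).differentiableAt)).continuousOn
    · intro z _
      exact (hasDerivF m hm0 hm1 z).differentiableAt.differentiableWithinAt
    · intro z hz
      rw [interior_Ici] at hz
      rw [(hasDerivF m hm0 hm1 z).deriv]
      have : G 0 ≤ G z := hGmono (le_of_lt hz)
      rw [hG0] at this
      exact this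
  have hF0 : F 0 = 0 := by
    rw [hF]
    simp only [Real.exp_zero, mul_one]
    have h1 : 1 - m + m = 1 := by ring
    rw [h1]
    simp
  have hFy : 0 ≤ F y := by
    have := hFmono (Set.self_mem_Ici) (Set.mem_Ici.mpr hy) hy
    rw [hF0] at this
    exact this
  have hlog : Real.log (1 - m + m * Real.exp y) ≤ y * m + y^2/8 := by
    rw [hF] at hFy
    simp only at hFy
    linarith
  calc 1 - m + m * Real.exp y
      = Real.exp (Real.log (1 - m + m * Real.exp y)) :=
        (Real.exp_log (phi_pos m hm0 hm1 y)).symm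
    _ ≤ Real.exp (y * m + y^2/8) := Real.exp_le_exp.mpr hlog

/-- Finite-population Hoeffding mgf bound. -/
lemma hoeffding_sum (n : ℕ) (hn : 0 < n) (s : Fin n → ℝ)
    (hs : ∀ j, s j ∈ Set.Icc (0:ℝ) 1) (lam : ℝ) (hlam : 0 ≤ lam) :
    ∑ i, Real.exp (lam * s i)
      ≤ (n : ℝ) * Real.exp (lam * ((∑ j, s j) / n) + lam^2 / 8) := by
  set m : ℝ := (∑ j, s j) / n with hm
  have hn' : (0:ℝ) < n := by exact_mod_cast hn
  have hm0 : 0 ≤ m := by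
    apply div_nonneg _ hn'.le
    exact Finset.sum_nonneg fun j _ => (hs j).1
  have hm1 : m ≤ 1 := by
    rw [hm, div_le_one hn']
    calc ∑ j, s j ≤ ∑ _j : Fin n, (1:ℝ) := Finset.sum_le_sum fun j _ => (hs j).2
      _ = n := by simp
  have hpt : ∀ i, Real.exp (lam * s i) ≤ 1 - s i + s i * Real.exp lam := by
    intro i
    have hcvx := convexOn_exp.2 (Set.mem_univ (0:ℝ)) (Set.mem_univ lam)
      (show (0:ℝ) ≤ 1 - s i by linarith [(hs i).2]) (hs i).1 (by ring)
    simpa [smul_eq_mul, Real.exp_zero, mul_comm] using hcvx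
  calc ∑ i, Real.exp (lam * s i)
      ≤ ∑ i, (1 - s i + s i * Real.exp lam) := Finset.sum_le_sum fun i _ => hpt i
    _ = (n:ℝ) * (1 - m + m * Real.exp lam) := by
        rw [hm]
        simp only [Finset.sum_add_distrib, Finset.sum_sub_distrib, Finset.sum_const,
          Finset.card_univ, Fintype.card_fin, nsmul_eq_mul, mul_one, ← Finset.sum_mul]
        field_simp
    _ ≤ (n:ℝ) * Real.exp (lam * m + lam^2/8) := by
        refine mul_le_mul_of_nonneg_left ?_ hn'.le
        exact logistic_bound m lam hm0 hm1 hlam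

end UCBAux

namespace UCBAux

lemma oneside (n p : ℕ) (hn : 0 < n) (s : Fin n → ℝ)
    (hs : ∀ j, s j ∈ Set.Icc (0:ℝ) 1) (mu : ℝ) (hmu : mu = (∑ j, s j) / n)
    (t : ℝ) (ht : 0 < t) :
    ((Finset.univ.filter
        (fun σ : Fin p ↪ Fin n => (p:ℝ) * mu + p * t ≤ ∑ k, s (σ k))).card : ℝ)
      ≤ (Fintype.card (Fin p ↪ Fin n) : ℝ) * Real.exp (-2 * p * t^2) := by
  classical
  set lam : ℝ := 4 * t with hlam
  have hlam0 : 0 < lam := by positivity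
  set x : Fin n → ℝ := fun i => Real.exp (lam * s i) with hx
  have hx0 : ∀ i, 0 ≤ x i := fun i => (Real.exp_pos _).le
  set Bad : Finset (Fin p ↪ Fin n) :=
    Finset.univ.filter (fun σ => (p:ℝ) * mu + p * t ≤ ∑ k, s (σ k)) with hBad
  set E₁ : ℝ := Real.exp (lam * ((p:ℝ) * mu + p * t)) with hE₁
  have hprod : ∀ σ : Fin p ↪ Fin n, ∏ k, x (σ k) = Real.exp (lam * ∑ k, s (σ k)) := by
    intro σ
    rw [Finset.mul_sum, Real.exp_sum]
  -- Chernoff step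
  have hα : (Bad.card : ℝ) * E₁ ≤ ∑ σ : Fin p ↪ Fin n, ∏ k, x (σ k) := by
    have h1 : (Bad.card : ℝ) * E₁ = ∑ _σ ∈ Bad, E₁ := by
      rw [Finset.sum_const, nsmul_eq_mul]
    rw [h1]
    refine le_trans (Finset.sum_le_sum fun σ hσ => ?_)
      (Finset.sum_le_sum_of_subset_of_nonneg (Finset.subset_univ Bad)
        (fun σ _ _ => Finset.prod_nonneg fun k _ => hx0 _))
    rw [hprod σ, hE₁]
    refine Real.exp_le_exp.mpr (mul_le_mul_of_nonneg_left ?_ hlam0.le)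
    exact (Finset.mem_filter.mp hσ).2
  -- Maclaurin + Hoeffding
  have hN : Fintype.card (Fin p ↪ Fin n) = n.descFactorial p := by
    simp [Fintype.card_embedding_eq]
  have hβ : ∑ σ : Fin p ↪ Fin n, ∏ k, x (σ k)
      ≤ (n.descFactorial p : ℝ) * Real.exp ((p:ℝ) * (lam * mu + lam^2/8)) := by
    have hmac := maclaurin n p x hx0
    have hhoef := hoeffding_sum n hn s hs lam hlam0.le
    have hxsum : ∑ i, x i ≤ (n:ℝ) * Real.exp (lam * mu + lam^2/8) := by
      rw [hx, hmu]; exact hhoef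
    have hxsum0 : 0 ≤ ∑ i, x i := Finset.sum_nonneg fun i _ => hx0 i
    have hpow : (∑ i, x i)^p ≤ ((n:ℝ) * Real.exp (lam * mu + lam^2/8))^p :=
      pow_le_pow_left₀ hxsum0 hxsum p
    have hnp : (0:ℝ) < (n:ℝ)^p := by positivity
    have : (n:ℝ)^p * ∑ σ : Fin p ↪ Fin n, ∏ k, x (σ k)
        ≤ (n.descFactorial p : ℝ) * ((n:ℝ)^p * Real.exp ((p:ℝ) * (lam * mu + lam^2/8))) := by
      refine le_trans hmac ?_
      rw [mul_pow] at hpow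
      calc (n.descFactorial p : ℝ) * (∑ i, x i)^p
          ≤ (n.descFactorial p : ℝ) * ((n:ℝ)^p * Real.exp (lam * mu + lam^2/8)^p) :=
            mul_le_mul_of_nonneg_left hpow (by positivity)
        _ = (n.descFactorial p : ℝ) * ((n:ℝ)^p * Real.exp ((p:ℝ) * (lam * mu + lam^2/8))) := by
            rw [← Real.exp_nat_mul]
    nlinarith [this]
  -- combine
  have hE₁pos : 0 < E₁ := Real.exp_pos _
  have hfinal : (Bad.card : ℝ) * E₁
      ≤ ((Fintype.card (Fin p ↪ Fin n) : ℝ) * Real.exp (-2 * p * t^2)) * E₁ := by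
    have : ((Fintype.card (Fin p ↪ Fin n) : ℝ) * Real.exp (-2 * p * t^2)) * E₁
        = (n.descFactorial p : ℝ) * Real.exp ((p:ℝ) * (lam * mu + lam^2/8)) := by
      rw [hN, hE₁, mul_assoc, ← Real.exp_add]
      congr 2
      rw [hlam]
      ring
    rw [this]
    exact le_trans hα hβ
  exact le_of_mul_le_mul_right hfinal hE₁pos

end UCBAux


set_option maxHeartbeats 1000000 in
/-- **High-probability validity of the UCB with sufficient exploration.**
Let `s 1, …, s n ∈ [0,1]` be a finite population with mean `μ`, draw
`X 1, …, X p` (with `1 ≤ p ≤ n`) uniformly at random without replacement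
(i.e. pick a uniformly random injection `σ : Fin p ↪ Fin n` and set `X k = s (σ k)`),
and fix `δ ∈ (0,1)`.  If `a ≥ (25/2)·log(2/δ)`, then with probability at least `1 - δ`
the empirical mean satisfies `|(X 1 + ⋯ + X p)/p - μ| < (1/5)·√(a/p)`; in particular,
the upper confidence bound `(X 1 + ⋯ + X p)/p + √(a/p)` exceeds `μ` with probability
at least `1 - δ`. -/
theorem ucb_exceeds_true_mean
    (n p : ℕ) (hp : 1 ≤ p) (hpn : p ≤ n)
    (s : Fin n → ℝ) (hs : ∀ j, s j ∈ Set.Icc (0 : ℝ) 1)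
    (μ : ℝ) (hμ : μ = (∑ j, s j) / n)
    (δ : ℝ) (hδ0 : 0 < δ) (hδ1 : δ < 1)
    (a : ℝ) (ha : 25 / 2 * Real.log (2 / δ) ≤ a) :
    haveI : Nonempty (Fin p ↪ Fin n) :=
      ⟨⟨Fin.castLE hpn, Fin.castLE_injective hpn⟩⟩
    ENNReal.ofReal (1 - δ) ≤
        (PMF.uniformOfFintype (Fin p ↪ Fin n)).toOuterMeasure
          {σ | |(∑ k, s (σ k)) / p - μ| < (1 / 5) * Real.sqrt (a / p)} ∧
      ENNReal.ofReal (1 - δ) ≤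
        (PMF.uniformOfFintype (Fin p ↪ Fin n)).toOuterMeasure
          {σ | μ < (∑ k, s (σ k)) / p + Real.sqrt (a / p)} := by
  classical
  haveI : Nonempty (Fin p ↪ Fin n) :=
    ⟨⟨Fin.castLE hpn, Fin.castLE_injective hpn⟩⟩
  have hn : 0 < n := lt_of_lt_of_le hp hpn
  have hn' : (0:ℝ) < n := by exact_mod_cast hn
  have hp' : (0:ℝ) < p := by exact_mod_cast hp
  have hlog : 0 < Real.log (2/δ) := Real.log_pos (by rw [lt_div_iff₀ hδ0]; linarith)
  have ha0 : 0 < a := lt_of_lt_of_le (by positivity) ha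
  have hap : 0 < a / p := div_pos ha0 hp'
  set t : ℝ := (1/5) * Real.sqrt (a/p) with htdef
  have ht : 0 < t := by positivity
  have ht2 : t^2 = a / (25 * p) := by
    rw [htdef, mul_pow, Real.sq_sqrt hap.le]
    ring
  -- the exponential bound
  have hexp : Real.exp (-2 * p * t^2) ≤ δ/2 := by
    have h1 : -2 * (p:ℝ) * t^2 ≤ -Real.log (2/δ) := by
      rw [ht2]
      have : -2 * (p:ℝ) * (a / (25 * p)) = -(2/25 * a) := by
        field_simp
      rw [this, neg_le_neg_iff]
      linarith
    calc Real.exp (-2 * p * t^2) ≤ Real.exp (-Real.log (2/δ)) := Real.exp_le_exp.mpr h1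
      _ = δ/2 := by
          rw [Real.exp_neg, Real.exp_log (by positivity)]
          rw [inv_div]
  set N : ℕ := Fintype.card (Fin p ↪ Fin n) with hN
  have hNpos : 0 < N := Fintype.card_pos
  have hNpos' : (0:ℝ) < N := by exact_mod_cast hNpos
  -- upper-tail bad set
  set BadU : Finset (Fin p ↪ Fin n) :=
    Finset.univ.filter (fun σ => (p:ℝ) * μ + p * t ≤ ∑ k, s (σ k)) with hBadU
  have hcardU : (BadU.card : ℝ) ≤ N * Real.exp (-2 * p * t^2) :=
    UCBAux.oneside n p hn s hs μ hμ t ht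
  -- lower-tail bad set
  set BadL : Finset (Fin p ↪ Fin n) :=
    Finset.univ.filter (fun σ => ∑ k, s (σ k) ≤ (p:ℝ) * μ - p * t) with hBadL
  have hcardL : (BadL.card : ℝ) ≤ N * Real.exp (-2 * p * t^2) := by
    have hs' : ∀ j, (fun i => 1 - s i) j ∈ Set.Icc (0:ℝ) 1 := by
      intro j
      constructor
      · simp only; linarith [(hs j).2]
      · simp only; linarith [(hs j).1]
    have hmu' : 1 - μ = (∑ j, (1 - s j)) / n := by
      rw [hμ]
      rw [Finset.sum_sub_distrib, Finset.sum_const, Finset.card_univ, Fintype.card_fin,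
        nsmul_eq_mul, mul_one]
      field_simp
    have h := UCBAux.oneside n p hn (fun i => 1 - s i) hs' (1 - μ) hmu' t ht
    have hsetseq : Finset.univ.filter
        (fun σ : Fin p ↪ Fin n => (p:ℝ) * (1 - μ) + p * t ≤ ∑ k, (1 - s (σ k))) = BadL := by
      refine Finset.filter_congr fun σ _ => ?_
      rw [Finset.sum_sub_distrib, Finset.sum_const, Finset.card_univ, Fintype.card_fin,
        nsmul_eq_mul, mul_one]
      constructor <;> intro h' <;> linarith
    rw [hsetseq] at h
    exact h
  -- good set
  have hgood : ∀ σ : Fin p ↪ Fin n, σ ∉ BadU → σ ∉ BadL →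
      |(∑ k, s (σ k)) / p - μ| < t := by
    intro σ hU hL
    simp only [hBadU, hBadL, Finset.mem_filter, Finset.mem_univ, true_and, not_le] at hU hL
    rw [abs_lt]
    constructor
    · have h1 : (p:ℝ) * μ - p * t < ∑ k, s (σ k) := hL
      have := (lt_div_iff₀ hp').mpr (show (μ - t) * p < ∑ k, s (σ k) by nlinarith)
      linarith
    · have h2 : ∑ k, s (σ k) < (p:ℝ) * μ + p * t := hU
      have := (div_lt_iff₀ hp').mpr (show ∑ k, s (σ k) < (μ + t) * p by nlinarith)
      linarith
  -- uniform measure of a set, as a count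
  have hmeas : ∀ S : Set (Fin p ↪ Fin n),
      (PMF.uniformOfFintype (Fin p ↪ Fin n)).toOuterMeasure S
        = ((Finset.univ.filter (fun σ => σ ∈ S)).card : ENNReal) * (N : ENNReal)⁻¹ := by
    intro S
    rw [PMF.toOuterMeasure_apply, tsum_fintype]
    calc ∑ σ, Set.indicator S (PMF.uniformOfFintype (Fin p ↪ Fin n)) σ
        = ∑ σ ∈ Finset.univ.filter (fun σ => σ ∈ S), (N : ENNReal)⁻¹ := by
          rw [Finset.sum_filter]
          refine Finset.sum_congr rfl fun σ _ => ?_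
          by_cases hσ : σ ∈ S <;>
            simp [Set.indicator_apply, hσ, PMF.uniformOfFintype_apply, hN]
      _ = ((Finset.univ.filter (fun σ => σ ∈ S)).card : ENNReal) * (N : ENNReal)⁻¹ := by
          rw [Finset.sum_const, nsmul_eq_mul]
  -- cardinality of the good set
  set S₁ : Set (Fin p ↪ Fin n) := {σ | |(∑ k, s (σ k)) / p - μ| < t} with hS₁
  have hc1 : (1 - δ) * N ≤ ((Finset.univ.filter (fun σ => σ ∈ S₁)).card : ℝ) := by
    have hsub : Finset.univ \ (BadU ∪ BadL) ⊆ Finset.univ.filter (fun σ => σ ∈ S₁) := by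
      intro σ hσ
      rw [Finset.mem_sdiff, Finset.mem_union] at hσ
      push_neg at hσ
      rw [Finset.mem_filter]
      exact ⟨Finset.mem_univ σ, hgood σ hσ.2.1 hσ.2.2⟩
    have hcard1 : (Finset.univ \ (BadU ∪ BadL)).card
        = N - (BadU ∪ BadL).card := by
      rw [Finset.card_sdiff_of_subset (Finset.subset_univ _), Finset.card_univ, hN]
    have hcard2 : (BadU ∪ BadL).card ≤ BadU.card + BadL.card := Finset.card_union_le _ _
    have hcard3 : (BadU ∪ BadL).card ≤ N := by
      calc (BadU ∪ BadL).card ≤ Finset.univ.card := Finset.card_le_univ _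
        _ = N := by rw [Finset.card_univ, hN]
    have hc4 : ((Finset.univ \ (BadU ∪ BadL)).card : ℝ)
        = (N : ℝ) - ((BadU ∪ BadL).card : ℝ) := by
      rw [hcard1, Nat.cast_sub hcard3]
    have hc5 : ((Finset.univ \ (BadU ∪ BadL)).card : ℝ)
        ≤ ((Finset.univ.filter (fun σ => σ ∈ S₁)).card : ℝ) := by
      exact_mod_cast Finset.card_le_card hsub
    have hNe : (N:ℝ) * Real.exp (-2 * p * t^2) ≤ (N:ℝ) * (δ/2) :=
      mul_le_mul_of_nonneg_left hexp hNpos'.le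
    have h6 : ((BadU ∪ BadL).card : ℝ) ≤ ((BadU.card : ℝ) + (BadL.card : ℝ)) := by
      exact_mod_cast hcard2
    have hgoal : (1 - δ) * (N:ℝ) = (N:ℝ) - δ * (N:ℝ) := by ring
    have hsum2 : (N:ℝ) * (δ/2) + (N:ℝ) * (δ/2) = δ * (N:ℝ) := by ring
    linarith [hcardU, hcardL]
  -- conclusion, first event
  have first : ENNReal.ofReal (1 - δ) ≤
      (PMF.uniformOfFintype (Fin p ↪ Fin n)).toOuterMeasure S₁ := by
    rw [hmeas S₁]
    have hdiv : (1 - δ) ≤ ((Finset.univ.filter (fun σ => σ ∈ S₁)).card : ℝ) / N := by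
      rw [le_div_iff₀ hNpos']
      linarith
    calc ENNReal.ofReal (1 - δ)
        ≤ ENNReal.ofReal (((Finset.univ.filter (fun σ => σ ∈ S₁)).card : ℝ) / N) :=
          ENNReal.ofReal_le_ofReal hdiv
      _ = ((Finset.univ.filter (fun σ => σ ∈ S₁)).card : ENNReal) * (N : ENNReal)⁻¹ := by
          rw [ENNReal.ofReal_div_of_pos hNpos', div_eq_mul_inv,
            ENNReal.ofReal_natCast, ENNReal.ofReal_natCast]
  have hsub2 : S₁ ⊆ {σ : Fin p ↪ Fin n | μ < (∑ k, s (σ k)) / p + Real.sqrt (a / p)} := by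
    intro σ hσ
    rw [hS₁, Set.mem_setOf_eq, abs_lt] at hσ
    rw [Set.mem_setOf_eq]
    have hsq : 0 ≤ Real.sqrt (a / p) := Real.sqrt_nonneg _
    have ht5 : t ≤ Real.sqrt (a / p) := by rw [htdef]; nlinarith
    linarith [hσ.1]
  exact ⟨first, le_trans first
    ((PMF.uniformOfFintype (Fin p ↪ Fin n)).toOuterMeasure.mono hsub2)⟩
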